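/- Let Ψ : K(ℝ^n) → C(S^{n-1},ℂ)' be a measure-valued functional that is weak*-continuous and locally determined. Then Ψ is a valuation: for all convex bodies K, L ∈ K(ℝ^n) such that K ∪ L is convex, the intersection K ∩ L is nonempty (hence a convex body) and Ψ(K ∪ L) + Ψ(K ∩ L) = Ψ(K) + Ψ(L) as continuous linear functionals on C(S^{n-1},ℂ). -/

import Mathlib

open scoped RealInnerProductSpace Pointwise
open Metric

noncomputable section

/-- `ℝⁿ` with the Euclidean inner product. -/
abbrev En (n : ℕ) : Type := EuclideanSpace ℝ (Fin n)

/-- The unit sphere `S^{n-1} ⊆ ℝⁿ`. -/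
abbrev Sph (n : ℕ) : Type := Metric.sphere (0 : En n) 1

/-- The support function of a set in `ℝⁿ`. -/
def suppFn {n : ℕ} (A : Set (En n)) (v : En n) : ℝ :=
  sSup ((fun x => ⟪x, v⟫) '' A)

/-- Measure-valued functionals: maps from convex bodies to continuous linear functionals on
`C(S^{n-1}, ℂ)` (identified with finite complex Borel measures by Riesz representation). -/
abbrev AreaFun (n : ℕ) : Type := ConvexBody (En n) → (C(Sph n, ℂ) →L[ℂ] ℂ)

/-- Weak* continuity of a measure-valued functional. -/
def WeakContinuous {n : ℕ} (Ψ : AreaFun n) : Prop :=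
  ∀ φ : C(Sph n, ℂ), Continuous fun K : ConvexBody (En n) => Ψ K φ

/-- A measure-valued functional is locally determined if `Ψ(K;φ) = Ψ(L;φ)` whenever the support
functions of `K` and `L` agree on an open set `U ⊆ S^{n-1}` containing the support of `φ`. -/
def LocallyDetermined {n : ℕ} (Ψ : AreaFun n) : Prop :=
  ∀ (K L : ConvexBody (En n)) (φ : C(Sph n, ℂ)) (U : Set (Sph n)), IsOpen U →
    (∀ v ∈ U, suppFn (K : Set (En n)) (v : En n) = suppFn (L : Set (En n)) (v : En n)) →
    tsupport φ ⊆ U → Ψ K φ = Ψ L φ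



namespace StmtZero

variable {n : ℕ}

lemma innerRight_continuous (v : En n) : Continuous fun x : En n => ⟪x, v⟫ :=
  continuous_id.inner continuous_const

lemma bddAbove_img {A : Set (En n)} (hA : IsCompact A) (v : En n) :
    BddAbove ((fun x => ⟪x, v⟫) '' A) :=
  (hA.image (innerRight_continuous v)).bddAbove

lemma le_suppFn {A : Set (En n)} (hA : IsCompact A) {x : En n} (hx : x ∈ A) (v : En n) :
    ⟪x, v⟫ ≤ suppFn A v :=
  le_csSup (bddAbove_img hA v) (Set.mem_image_of_mem _ hx)

lemma suppFn_le {A : Set (En n)} (hne : A.Nonempty) {v : En n} {c : ℝ}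
    (h : ∀ x ∈ A, ⟪x, v⟫ ≤ c) : suppFn A v ≤ c :=
  csSup_le (hne.image _) (by rintro y ⟨x, hx, rfl⟩; exact h x hx)

lemma suppFn_attained {A : Set (En n)} (hA : IsCompact A) (hne : A.Nonempty) (v : En n) :
    ∃ x ∈ A, suppFn A v = ⟪x, v⟫ := by
  obtain ⟨x, hx, hmax⟩ := hA.exists_isMaxOn hne ((innerRight_continuous v).continuousOn)
  exact ⟨x, hx, le_antisymm (suppFn_le hne fun y hy => hmax hy) (le_suppFn hA hx v)⟩

lemma suppFn_mono {A B : Set (En n)} (hne : A.Nonempty) (hB : IsCompact B) (h : A ⊆ B)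
    (v : En n) : suppFn A v ≤ suppFn B v :=
  csSup_le_csSup (bddAbove_img hB v) (hne.image _) (Set.image_mono h)

lemma suppFn_union {A B : Set (En n)} (hA : IsCompact A) (hAne : A.Nonempty)
    (hB : IsCompact B) (hBne : B.Nonempty) (v : En n) :
    suppFn (A ∪ B) v = max (suppFn A v) (suppFn B v) := by
  unfold suppFn
  rw [Set.image_union, csSup_union (bddAbove_img hA v) (hAne.image _)
    (bddAbove_img hB v) (hBne.image _)]

lemma isLinearMap_inner_right (v : En n) : IsLinearMap ℝ (fun x : En n => ⟪x, v⟫) :=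
  ⟨fun x y => inner_add_left x y v, fun c x => real_inner_smul_left x v c⟩

lemma suppFn_convexHull {A : Set (En n)} (hA : IsCompact A) (hne : A.Nonempty) (v : En n) :
    suppFn (convexHull ℝ A) v = suppFn A v := by
  have hsub : convexHull ℝ A ⊆ {w : En n | ⟪w, v⟫ ≤ suppFn A v} :=
    convexHull_min (fun y hy => le_suppFn hA hy v) (convex_halfSpace_le (isLinearMap_inner_right v) _)
  refine le_antisymm ?_ ?_
  · exact suppFn_le (hne.mono (subset_convexHull ℝ A)) (fun x hx => hsub hx)
  · refine csSup_le_csSup ⟨suppFn A v, ?_⟩ (hne.image _)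
      (Set.image_mono (subset_convexHull ℝ A))
    rintro y ⟨x, hx, rfl⟩
    exact hsub hx

lemma suppFn_translate {A : Set (En n)} (hA : IsCompact A) (hne : A.Nonempty) (c v : En n) :
    suppFn ((fun x => x + c) '' A) v = suppFn A v + ⟪c, v⟫ := by
  obtain ⟨x₀, hx₀, hx₀eq⟩ := suppFn_attained hA hne v
  have hgr : IsGreatest ((fun x => ⟪x, v⟫) '' ((fun x => x + c) '' A)) (⟪x₀, v⟫ + ⟪c, v⟫) := by
    constructor
    · exact ⟨x₀ + c, Set.mem_image_of_mem _ hx₀, by simp only [inner_add_left]⟩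
    · rintro y ⟨z, ⟨x, hx, rfl⟩, rfl⟩
      have hxle : ⟪x, v⟫ ≤ ⟪x₀, v⟫ := hx₀eq ▸ le_suppFn hA hx v
      simp only [inner_add_left]
      linarith
  rw [suppFn, hgr.csSup_eq, hx₀eq]

lemma exists_mem_inter_segment {A B : Set (En n)} (hAc : IsClosed A) (hBc : IsClosed B)
    (hconv : Convex ℝ (A ∪ B)) {x z : En n} (hx : x ∈ A) (hz : z ∈ B) :
    ∃ y ∈ segment ℝ x z, y ∈ A ∩ B := by
  by_cases hzA : z ∈ A
  · exact ⟨z, right_mem_segment ℝ x z, hzA, hz⟩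
  by_cases hxB : x ∈ B
  · exact ⟨x, left_mem_segment ℝ x z, hx, hxB⟩
  by_contra hcon
  push_neg at hcon
  have hseg : segment ℝ x z ⊆ A ∪ B := hconv.segment_subset (Or.inl hx) (Or.inr hz)
  have hpc : IsPreconnected (segment ℝ x z) := (convex_segment x z).isPreconnected
  obtain ⟨y, hyseg, hyA, hyB⟩ := hpc Aᶜ Bᶜ hAc.isOpen_compl hBc.isOpen_compl
    (fun y hy => by
      by_cases hyA : y ∈ A
      · by_cases hyB : y ∈ B
        · exact absurd ⟨hyA, hyB⟩ (hcon y hy)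
        · exact Or.inr hyB
      · exact Or.inl hyA)
    ⟨z, right_mem_segment ℝ x z, hzA⟩ ⟨x, left_mem_segment ℝ x z, hxB⟩
  exact (hseg hyseg).elim hyA hyB

lemma suppFn_inter_of_union_convex {A B : Set (En n)} (hA : IsCompact A) (hAne : A.Nonempty)
    (hB : IsCompact B) (hBne : B.Nonempty) (hconv : Convex ℝ (A ∪ B)) (v : En n) :
    suppFn (A ∩ B) v = min (suppFn A v) (suppFn B v) := by
  obtain ⟨x, hx, hxval⟩ := suppFn_attained hA hAne v
  obtain ⟨z, hz, hzval⟩ := suppFn_attained hB hBne v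
  obtain ⟨y, hyseg, hyAB⟩ := exists_mem_inter_segment hA.isClosed hB.isClosed hconv hx hz
  refine le_antisymm (le_min (suppFn_mono ⟨y, hyAB⟩ hA Set.inter_subset_left v)
    (suppFn_mono ⟨y, hyAB⟩ hB Set.inter_subset_right v)) ?_
  obtain ⟨a, b, ha, hb, hab, hy⟩ := hyseg
  have hyv : ⟪y, v⟫ = a * ⟪x, v⟫ + b * ⟪z, v⟫ := by
    rw [← hy, inner_add_left, real_inner_smul_left, real_inner_smul_left]
  have h1 : min (suppFn A v) (suppFn B v) ≤ ⟪x, v⟫ := hxval ▸ min_le_left _ _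
  have h2 : min (suppFn A v) (suppFn B v) ≤ ⟪z, v⟫ := hzval ▸ min_le_right _ _
  have hmin : min (suppFn A v) (suppFn B v) ≤ ⟪y, v⟫ := by
    rw [hyv]
    have hsum : a * min (suppFn A v) (suppFn B v) + b * min (suppFn A v) (suppFn B v)
        = min (suppFn A v) (suppFn B v) := by rw [← add_mul, hab, one_mul]
    have hh1 := mul_le_mul_of_nonneg_left h1 ha
    have hh2 := mul_le_mul_of_nonneg_left h2 hb
    linarith
  exact hmin.trans (le_suppFn (hA.inter_right hB.isClosed) hyAB v)

lemma suppFn_continuous {A : Set (En n)} (hA : IsCompact A) (hne : A.Nonempty) :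
    Continuous fun v : En n => suppFn A v := by
  obtain ⟨R, hR⟩ := hA.isBounded.exists_norm_le
  have key : ∀ v w : En n, suppFn A v - suppFn A w ≤ max R 0 * ‖v - w‖ := by
    intro v w
    obtain ⟨x, hx, hxval⟩ := suppFn_attained hA hne v
    have h1 : ⟪x, v⟫ - ⟪x, w⟫ ≤ ‖x‖ * ‖v - w‖ := by
      rw [← inner_sub_right]
      exact real_inner_le_norm x (v - w)
    have h3 : ⟪x, w⟫ ≤ suppFn A w := le_suppFn hA hx w
    have h5 : ‖x‖ * ‖v - w‖ ≤ max R 0 * ‖v - w‖ :=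
      mul_le_mul_of_nonneg_right ((hR x hx).trans (le_max_left _ _)) (norm_nonneg _)
    linarith [hxval]
  have hlip : LipschitzWith (Real.toNNReal (max R 0)) (fun v : En n => suppFn A v) := by
    apply LipschitzWith.of_dist_le_mul
    intro v w
    rw [Real.dist_eq, Real.coe_toNNReal _ (le_max_right R 0), dist_eq_norm, abs_sub_le_iff]
    exact ⟨key v w, by simpa [norm_sub_rev] using key w v⟩
  exact hlip.continuous

lemma isCompact_convexHull_union {A B : Set (En n)} (hA : IsCompact A) (hAne : A.Nonempty)
    (hB : IsCompact B) (hBne : B.Nonempty) (hAc : Convex ℝ A) (hBc : Convex ℝ B) :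
    IsCompact (convexHull ℝ (A ∪ B)) := by
  rw [hAc.convexHull_union hBc hAne hBne]
  have himg : convexJoin ℝ A B =
      (fun p : ℝ × En n × En n => (1 - p.1) • p.2.1 + p.1 • p.2.2) ''
        (Set.Icc (0:ℝ) 1 ×ˢ A ×ˢ B) := by
    ext y
    constructor
    · intro hy
      rw [mem_convexJoin] at hy
      obtain ⟨a, ha, b, hb, hseg⟩ := hy
      rw [segment_eq_image] at hseg
      obtain ⟨θ, hθ, rfl⟩ := hseg
      exact ⟨(θ, a, b), ⟨hθ, ha, hb⟩, rfl⟩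
    · rintro ⟨⟨θ, a, b⟩, ⟨hθ, ha, hb⟩, rfl⟩
      rw [mem_convexJoin]
      refine ⟨a, ha, b, hb, ?_⟩
      rw [segment_eq_image]
      exact ⟨θ, hθ, rfl⟩
  rw [himg]
  exact (isCompact_Icc.prod (hA.prod hB)).image (by fun_prop)

lemma max_aux1 {a b s : ℝ} (h : max a s ≤ max b s) : max (max a b) s = max b s := by
  have ha : a ≤ max b s := le_trans (le_max_left a s) h
  rw [max_assoc]
  exact max_eq_right ha

lemma max_aux2 {a b c s : ℝ} (hc : c = min a b) (h : max a s ≤ max b s) :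
    max c s = max a s := by
  rcases le_total a s with has | hsa
  · rw [max_eq_right has, max_eq_right ((hc ▸ min_le_left a b : c ≤ a).trans has)]
  · rcases le_total a b with hab | hba
    · rw [hc, min_eq_left hab]
    · have h2 : max b s ≤ max a s := max_le_max hba le_rfl
      have he : max a s = max b s := le_antisymm h h2
      rw [hc, min_eq_right hba]
      exact he.symm

lemma split_two {X : Type*} [MetricSpace X] [CompactSpace X] (ψ : C(X, ℂ)) (C D : Set X)
    (hC : IsClosed C) (hD : IsClosed D) (hdisj : tsupport ⇑ψ ∩ (C ∩ D) = ∅) :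
    ∃ ψ₁ ψ₂ : C(X, ℂ), ψ = ψ₁ + ψ₂ ∧ tsupport ⇑ψ₁ ⊆ Dᶜ ∧ tsupport ⇑ψ₂ ⊆ Cᶜ := by
  have htsupp0 : tsupport ⇑(0 : C(X, ℂ)) = ∅ := by
    simp [tsupport, Function.support_zero]
  set A := tsupport ⇑ψ ∩ C with hAdef
  set B := tsupport ⇑ψ ∩ D with hBdef
  rcases Set.eq_empty_or_nonempty A with hAe | hAne
  · refine ⟨0, ψ, by simp, by rw [htsupp0]; exact Set.empty_subset _, ?_⟩
    intro x hx hxC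
    exact absurd (hAdef ▸ Set.mem_inter hx hxC) (hAe ▸ Set.notMem_empty x)
  rcases Set.eq_empty_or_nonempty B with hBe | hBne
  · refine ⟨ψ, 0, by simp, ?_, by rw [htsupp0]; exact Set.empty_subset _⟩
    intro x hx hxD
    exact absurd (hBdef ▸ Set.mem_inter hx hxD) (hBe ▸ Set.notMem_empty x)
  have hAcl : IsClosed A := (isClosed_tsupport _).inter hC
  have hBcl : IsClosed B := (isClosed_tsupport _).inter hD
  have hBcp : IsCompact B := hBcl.isCompact
  obtain ⟨b₀, hb₀, hb₀min⟩ := hBcp.exists_isMinOn hBne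
    (Metric.continuous_infDist_pt A).continuousOn
  have hb₀A : b₀ ∉ A := by
    intro hmem
    have : b₀ ∈ tsupport ⇑ψ ∩ (C ∩ D) := ⟨hmem.1, hmem.2, hb₀.2⟩
    exact (hdisj ▸ this : b₀ ∈ (∅ : Set X))
  have hdpos : 0 < Metric.infDist b₀ A := (hAcl.notMem_iff_infDist_pos hAne).mp hb₀A
  set r : ℝ := Metric.infDist b₀ A / 3 with hrdef
  have hrpos : 0 < r := by positivity
  set χ : X → ℝ := fun x => min 1 (max ((Metric.infDist x A - r) / r) 0) with hχdef
  have hχcont : Continuous χ := by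
    apply Continuous.min continuous_const
    apply Continuous.max (Continuous.div_const ((Metric.continuous_infDist_pt A).sub continuous_const) r) continuous_const
  set χC : C(X, ℂ) := ⟨fun x => ((χ x : ℝ) : ℂ), Complex.continuous_ofReal.comp hχcont⟩ with hχC
  have hχ0 : ∀ x, Metric.infDist x A < r → χ x = 0 := by
    intro x hx
    have h1 : (Metric.infDist x A - r) / r ≤ 0 :=
      div_nonpos_of_nonpos_of_nonneg (by linarith) hrpos.le
    simp only [hχdef]
    rw [max_eq_right h1, min_eq_right (by norm_num)]
  have hχ1 : ∀ x, 2 * r ≤ Metric.infDist x A → χ x = 1 := by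
    intro x hx
    have h1 : (1:ℝ) ≤ (Metric.infDist x A - r) / r := by
      rw [le_div_iff₀ hrpos]; linarith
    simp only [hχdef]
    rw [max_eq_left (le_trans (by norm_num) h1), min_eq_left h1]
  refine ⟨ψ - ψ * χC, ψ * χC, by ring, ?_, ?_⟩
  · -- support in Dᶜ
    have hsub : tsupport ⇑(ψ - ψ * χC) ⊆ tsupport ⇑ψ ∩ {x | Metric.infDist x A ≤ 2 * r} := by
      apply closure_minimal
      · intro x hx
        simp only [Function.mem_support, ContinuousMap.coe_sub, ContinuousMap.coe_mul,
          Pi.sub_apply, Pi.mul_apply] at hx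
        constructor
        · apply subset_tsupport
          intro h0
          apply hx
          simp [hχC, h0]
        · by_contra hgt
          simp only [Set.mem_setOf_eq, not_le] at hgt
          apply hx
          have := hχ1 x hgt.le
          simp [hχC, this]
      · exact (isClosed_tsupport _).inter
          (isClosed_le (Metric.continuous_infDist_pt A) continuous_const)
    intro x hx hxD
    have hxB : x ∈ B := ⟨(hsub hx).1, hxD⟩
    have h3 : Metric.infDist b₀ A ≤ Metric.infDist x A := hb₀min hxB
    have h4 := (hsub hx).2
    simp only [Set.mem_setOf_eq] at h4
    rw [hrdef] at h4
    linarith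
  · -- support in Cᶜ
    have hsub : tsupport ⇑(ψ * χC) ⊆ tsupport ⇑ψ ∩ {x | r ≤ Metric.infDist x A} := by
      apply closure_minimal
      · intro x hx
        simp only [Function.mem_support, ContinuousMap.coe_mul, Pi.mul_apply] at hx
        constructor
        · apply subset_tsupport
          intro h0
          apply hx
          rw [h0, zero_mul]
        · by_contra hlt
          simp only [Set.mem_setOf_eq, not_le] at hlt
          apply hx
          have := hχ0 x hlt
          simp [hχC, this]
      · exact (isClosed_tsupport _).inter
          (isClosed_le continuous_const (Metric.continuous_infDist_pt A))
    intro x hx hxC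
    have hxA : x ∈ A := ⟨(hsub hx).1, hxC⟩
    have h0 : Metric.infDist x A = 0 := Metric.infDist_zero_of_mem hxA
    have h4 := (hsub hx).2
    simp only [Set.mem_setOf_eq, h0] at h4
    linarith

lemma convex_translate_img {A : Set (En n)} (hA : Convex ℝ A) (c : En n) :
    Convex ℝ ((fun x => x + c) '' A) := by
  have h1 : (fun x : En n => x + c) '' A = (fun x : En n => c + x) '' A := by
    ext y; constructor <;> rintro ⟨x, hx, rfl⟩ <;> exact ⟨x, hx, by simp [add_comm]⟩
  rw [h1]
  exact hA.translate c

def hatBody (X Nb : ConvexBody (En n)) (w : En n) : ConvexBody (En n) :=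
  ⟨convexHull ℝ ((X : Set (En n)) ∪ (fun x => x + w) '' (Nb : Set (En n))),
   convex_convexHull ℝ _,
   isCompact_convexHull_union X.isCompact X.nonempty
     (Nb.isCompact.image (continuous_id.add continuous_const)) (Nb.nonempty.image _)
     X.convex (convex_translate_img Nb.convex w),
   ⟨X.nonempty.choose, subset_convexHull ℝ _ (Or.inl X.nonempty.choose_spec)⟩⟩

lemma hatBody_coe (X Nb : ConvexBody (En n)) (w : En n) :
    (hatBody X Nb w : Set (En n))
      = convexHull ℝ ((X : Set (En n)) ∪ (fun x => x + w) '' (Nb : Set (En n))) := rfl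

lemma suppFn_hatBody (X Nb : ConvexBody (En n)) (w v : En n) :
    suppFn (hatBody X Nb w : Set (En n)) v
      = max (suppFn (X : Set (En n)) v) (suppFn (Nb : Set (En n)) v + ⟪w, v⟫) := by
  have hTc : IsCompact ((fun x => x + w) '' (Nb : Set (En n))) :=
    Nb.isCompact.image (by fun_prop)
  rw [hatBody_coe,
    suppFn_convexHull (X.isCompact.union hTc) (X.nonempty.inl),
    suppFn_union X.isCompact X.nonempty hTc (Nb.nonempty.image _),
    suppFn_translate Nb.isCompact Nb.nonempty]

lemma hatBody_dist_le (X Nb : ConvexBody (En n)) (hsub : (Nb : Set (En n)) ⊆ (X : Set (En n)))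
    {ρ : ℝ} (hρ : 0 ≤ ρ) {u : En n} (hu : ‖u‖ = 1) :
    dist (hatBody X Nb (ρ • u)) X ≤ ρ := by
  rw [← ConvexBody.hausdorffDist_coe]
  apply Metric.hausdorffDist_le_of_mem_dist hρ
  · intro x hx
    have hsubset : (hatBody X Nb (ρ • u) : Set (En n))
        ⊆ (X : Set (En n)) + Metric.closedBall 0 ρ := by
      rw [hatBody_coe]
      apply convexHull_min ?_ (X.convex.add (convex_closedBall 0 ρ))
      rintro y (hy | ⟨z, hz, rfl⟩)
      · rw [Set.mem_add]
        exact ⟨y, hy, 0, Metric.mem_closedBall_self hρ, add_zero y⟩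
      · rw [Set.mem_add]
        refine ⟨z, hsub hz, ρ • u, ?_, rfl⟩
        rw [mem_closedBall_zero_iff, norm_smul, hu, Real.norm_eq_abs, abs_of_nonneg hρ, mul_one]
    obtain ⟨y, hy, z, hz, rfl⟩ := Set.mem_add.mp (hsubset hx)
    refine ⟨y, hy, ?_⟩
    rw [dist_eq_norm, add_sub_cancel_left]
    exact mem_closedBall_zero_iff.mp hz
  · intro x hx
    exact ⟨x, subset_convexHull ℝ _ (Or.inl hx), by simpa using hρ⟩

lemma hatBody_tendsto (X Nb : ConvexBody (En n))
    (hsub : (Nb : Set (En n)) ⊆ (X : Set (En n))) {u : En n} (hu : ‖u‖ = 1) :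
    Filter.Tendsto (fun j : ℕ => hatBody X Nb ((1 / ((j : ℝ) + 1)) • u))
      Filter.atTop (nhds X) := by
  rw [tendsto_iff_dist_tendsto_zero]
  apply squeeze_zero (fun j => dist_nonneg)
    (fun j => hatBody_dist_le X Nb hsub (by positivity) hu)
  exact tendsto_one_div_add_atTop_nhds_zero_nat

lemma hemisphere_case (n : ℕ) (Ψ : AreaFun n) (hcont : WeakContinuous Ψ)
    (hloc : LocallyDetermined Ψ) (K L Mb Nb : ConvexBody (En n))
    (hconv : Convex ℝ ((K : Set (En n)) ∪ (L : Set (En n))))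
    (hM : (Mb : Set (En n)) = (K : Set (En n)) ∪ (L : Set (En n)))
    (hN : (Nb : Set (En n)) = (K : Set (En n)) ∩ (L : Set (En n)))
    (u : En n) (hu : ‖u‖ = 1) (ψ : C(Sph n, ℂ))
    (hψ : tsupport ⇑ψ ⊆ {v : Sph n | 0 < ⟪u, (v : En n)⟫}) :
    Ψ Mb ψ + Ψ Nb ψ = Ψ K ψ + Ψ L ψ := by
  classical
  have hKcont : Continuous fun v : Sph n => suppFn (K : Set (En n)) (v : En n) :=
    (suppFn_continuous K.isCompact K.nonempty).comp continuous_subtype_val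
  have hLcont : Continuous fun v : Sph n => suppFn (L : Set (En n)) (v : En n) :=
    (suppFn_continuous L.isCompact L.nonempty).comp continuous_subtype_val
  have hNbcont : Continuous fun v : Sph n => suppFn (Nb : Set (En n)) (v : En n) :=
    (suppFn_continuous Nb.isCompact Nb.nonempty).comp continuous_subtype_val
  have hNmin : ∀ v : Sph n, suppFn (Nb : Set (En n)) (v : En n)
      = min (suppFn (K : Set (En n)) (v : En n)) (suppFn (L : Set (En n)) (v : En n)) := by
    intro v
    rw [hN]
    exact suppFn_inter_of_union_convex K.isCompact K.nonempty L.isCompact L.nonempty hconv _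
  have hMmax : ∀ v : Sph n, suppFn (Mb : Set (En n)) (v : En n)
      = max (suppFn (K : Set (En n)) (v : En n)) (suppFn (L : Set (En n)) (v : En n)) := by
    intro v
    rw [hM]
    exact suppFn_union K.isCompact K.nonempty L.isCompact L.nonempty _
  -- the key identity for each ρ > 0
  have key : ∀ ρ : ℝ, 0 < ρ →
      Ψ (hatBody Mb Nb (ρ • u)) ψ + Ψ (hatBody Nb Nb (ρ • u)) ψ
        = Ψ (hatBody K Nb (ρ • u)) ψ + Ψ (hatBody L Nb (ρ • u)) ψ := by
    intro ρ hρ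
    set w : En n := ρ • u with hwdef
    set P : Sph n → ℝ := fun v =>
      max (suppFn (K : Set (En n)) (v : En n))
        (suppFn (Nb : Set (En n)) (v : En n) + ⟪w, (v : En n)⟫) with hPdef
    set Q : Sph n → ℝ := fun v =>
      max (suppFn (L : Set (En n)) (v : En n))
        (suppFn (Nb : Set (En n)) (v : En n) + ⟪w, (v : En n)⟫) with hQdef
    have hscont : Continuous fun v : Sph n =>
        suppFn (Nb : Set (En n)) (v : En n) + ⟪w, (v : En n)⟫ :=
      hNbcont.add (continuous_const.inner continuous_subtype_val)
    have hPcont : Continuous P := hKcont.max hscont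
    have hQcont : Continuous Q := hLcont.max hscont
    set Cp : Set (Sph n) := closure {v | Q v < P v} with hCpdef
    set Cm : Set (Sph n) := closure {v | P v < Q v} with hCmdef
    have hCpsub : Cp ⊆ {v | Q v ≤ suppFn (K : Set (En n)) (v : En n)} := by
      apply closure_minimal ?_ (isClosed_le hQcont hKcont)
      intro v hv
      simp only [Set.mem_setOf_eq] at hv ⊢
      by_contra hcon
      push_neg at hcon
      have : P v ≤ Q v := max_le hcon.le (le_max_right _ _)
      linarith
    have hCmsub : Cm ⊆ {v | P v ≤ suppFn (L : Set (En n)) (v : En n)} := by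
      apply closure_minimal ?_ (isClosed_le hPcont hLcont)
      intro v hv
      simp only [Set.mem_setOf_eq] at hv ⊢
      by_contra hcon
      push_neg at hcon
      have : Q v ≤ P v := max_le hcon.le (le_max_right _ _)
      linarith
    have hdisj : tsupport ⇑ψ ∩ (Cp ∩ Cm) = ∅ := by
      rw [Set.eq_empty_iff_forall_notMem]
      rintro v ⟨hvs, hvp, hvm⟩
      have h1 : Q v ≤ suppFn (K : Set (En n)) (v : En n) := hCpsub hvp
      have h2 : P v ≤ suppFn (L : Set (En n)) (v : En n) := hCmsub hvm
      have hKP : suppFn (K : Set (En n)) (v : En n) ≤ P v := le_max_left _ _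
      have hLQ : suppFn (L : Set (En n)) (v : En n) ≤ Q v := le_max_left _ _
      have hKL : suppFn (K : Set (En n)) (v : En n) = suppFn (L : Set (En n)) (v : En n) :=
        le_antisymm (hKP.trans h2) (hLQ.trans h1)
      have hsK : suppFn (Nb : Set (En n)) (v : En n) + ⟪w, (v : En n)⟫
          ≤ suppFn (K : Set (En n)) (v : En n) := (le_max_right _ _).trans h1
      have hNv : suppFn (Nb : Set (En n)) (v : En n) = suppFn (K : Set (En n)) (v : En n) := by
        rw [hNmin v, ← hKL, min_self]
      have hpos : 0 < ⟪w, (v : En n)⟫ := by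
        rw [hwdef, real_inner_smul_left]
        exact mul_pos hρ (hψ hvs)
      linarith [hsK, hNv ▸ hsK]
    obtain ⟨ψ₁, ψ₂, hsum, hs1, hs2⟩ :=
      split_two ψ Cp Cm isClosed_closure isClosed_closure hdisj
    have hUp : IsOpen Cpᶜ := isClosed_closure.isOpen_compl
    have hUm : IsOpen Cmᶜ := isClosed_closure.isOpen_compl
    have hPQ : ∀ v ∈ Cpᶜ, P v ≤ Q v := by
      intro v hv
      by_contra hcon
      exact hv (subset_closure (by simpa using not_le.mp hcon))
    have hQP : ∀ v ∈ Cmᶜ, Q v ≤ P v := by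
      intro v hv
      by_contra hcon
      exact hv (subset_closure (by simpa using not_le.mp hcon))
    -- four local determination identities
    have e1 : Ψ (hatBody Mb Nb w) ψ₂ = Ψ (hatBody L Nb w) ψ₂ := by
      apply hloc _ _ _ Cpᶜ hUp ?_ hs2
      intro v hv
      rw [suppFn_hatBody, suppFn_hatBody, hMmax v]
      exact max_aux1 (hPQ v hv)
    have e2 : Ψ (hatBody Nb Nb w) ψ₂ = Ψ (hatBody K Nb w) ψ₂ := by
      apply hloc _ _ _ Cpᶜ hUp ?_ hs2
      intro v hv
      rw [suppFn_hatBody, suppFn_hatBody]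
      exact max_aux2 (hNmin v) (hPQ v hv)
    have e3 : Ψ (hatBody Mb Nb w) ψ₁ = Ψ (hatBody K Nb w) ψ₁ := by
      apply hloc _ _ _ Cmᶜ hUm ?_ hs1
      intro v hv
      rw [suppFn_hatBody, suppFn_hatBody, hMmax v,
        max_comm (suppFn (K : Set (En n)) (v : En n)) (suppFn (L : Set (En n)) (v : En n))]
      exact max_aux1 (hQP v hv)
    have e4 : Ψ (hatBody Nb Nb w) ψ₁ = Ψ (hatBody L Nb w) ψ₁ := by
      apply hloc _ _ _ Cmᶜ hUm ?_ hs1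
      intro v hv
      rw [suppFn_hatBody, suppFn_hatBody]
      exact max_aux2 (by rw [hNmin v, min_comm]) (hQP v hv)
    have exp : ∀ Xb : ConvexBody (En n), Ψ Xb ψ = Ψ Xb ψ₁ + Ψ Xb ψ₂ := by
      intro Xb
      rw [hsum, map_add]
    rw [exp (hatBody Mb Nb w), exp (hatBody Nb Nb w), exp (hatBody K Nb w),
      exp (hatBody L Nb w), e1, e2, e3, e4]
    ring
  -- pass to the limit ρ → 0
  have hsubK : (Nb : Set (En n)) ⊆ (K : Set (En n)) := by
    rw [hN]; exact Set.inter_subset_left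
  have hsubL : (Nb : Set (En n)) ⊆ (L : Set (En n)) := by
    rw [hN]; exact Set.inter_subset_right
  have hsubM : (Nb : Set (En n)) ⊆ (Mb : Set (En n)) := by
    rw [hN, hM]; exact Set.inter_subset_left.trans Set.subset_union_left
  have hsubN : (Nb : Set (En n)) ⊆ (Nb : Set (En n)) := subset_rfl
  have t1 := ((hcont ψ).tendsto Mb).comp (hatBody_tendsto Mb Nb hsubM hu)
  have t2 := ((hcont ψ).tendsto Nb).comp (hatBody_tendsto Nb Nb hsubN hu)
  have t3 := ((hcont ψ).tendsto K).comp (hatBody_tendsto K Nb hsubK hu)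
  have t4 := ((hcont ψ).tendsto L).comp (hatBody_tendsto L Nb hsubL hu)
  have hT := (t1.add t2).sub (t3.add t4)
  have hF0 : (fun j : ℕ =>
      (Ψ (hatBody Mb Nb ((1 / ((j : ℝ) + 1)) • u)) ψ
        + Ψ (hatBody Nb Nb ((1 / ((j : ℝ) + 1)) • u)) ψ)
      - (Ψ (hatBody K Nb ((1 / ((j : ℝ) + 1)) • u)) ψ
        + Ψ (hatBody L Nb ((1 / ((j : ℝ) + 1)) • u)) ψ)) = fun _ => (0 : ℂ) := by
    funext j
    rw [key (1 / ((j : ℝ) + 1)) (by positivity)]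
    ring
  have hT' : Filter.Tendsto (fun _ : ℕ => (0 : ℂ)) Filter.atTop
      (nhds ((Ψ Mb ψ + Ψ Nb ψ) - (Ψ K ψ + Ψ L ψ))) := by
    have := hT
    simp only [Function.comp] at this
    rwa [hF0] at this
  have hzero : (Ψ Mb ψ + Ψ Nb ψ) - (Ψ K ψ + Ψ L ψ) = 0 :=
    (tendsto_nhds_unique tendsto_const_nhds hT').symm
  linear_combination hzero

end StmtZero

/-- A weak*-continuous and locally determined measure-valued functional is a
valuation: if `K ∪ L` is convex then `K ∩ L` is nonempty and
`Ψ(K ∪ L) + Ψ(K ∩ L) = Ψ(K) + Ψ(L)`. -/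
theorem valuation_of_weakContinuous_locallyDetermined (n : ℕ) (hn : 1 ≤ n)
    (Ψ : AreaFun n) (hcont : WeakContinuous Ψ) (hloc : LocallyDetermined Ψ)
    (K L : ConvexBody (En n)) (hconv : Convex ℝ ((K : Set (En n)) ∪ (L : Set (En n)))) :
    ∃ hne : ((K : Set (En n)) ∩ (L : Set (En n))).Nonempty,
      ∀ φ : C(Sph n, ℂ),
        Ψ ⟨(K : Set (En n)) ∪ (L : Set (En n)), hconv, K.isCompact.union L.isCompact,
            K.nonempty.mono Set.subset_union_left⟩ φ
          + Ψ ⟨(K : Set (En n)) ∩ (L : Set (En n)), K.convex.inter L.convex,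
              K.isCompact.inter_right L.isClosed, hne⟩ φ
          = Ψ K φ + Ψ L φ := by
  classical
  have hne0 : ((K : Set (En n)) ∩ (L : Set (En n))).Nonempty := by
    obtain ⟨x, hx⟩ := K.nonempty
    obtain ⟨z, hz⟩ := L.nonempty
    obtain ⟨y, _, hy⟩ := StmtZero.exists_mem_inter_segment K.isClosed L.isClosed hconv hx hz
    exact ⟨y, hy⟩
  refine ⟨hne0, fun φ => ?_⟩
  set Mb : ConvexBody (En n) :=
    ⟨(K : Set (En n)) ∪ (L : Set (En n)), hconv, K.isCompact.union L.isCompact,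
      K.nonempty.mono Set.subset_union_left⟩ with hMbdef
  set Nb : ConvexBody (En n) :=
    ⟨(K : Set (En n)) ∩ (L : Set (En n)), K.convex.inter L.convex,
      K.isCompact.inter_right L.isClosed, hne0⟩ with hNbdef
  show Ψ Mb φ + Ψ Nb φ = Ψ K φ + Ψ L φ
  haveI : Nonempty (Fin n) := ⟨⟨0, hn⟩⟩
  have hnpos : (0 : ℝ) < (n : ℝ) := by exact_mod_cast hn
  set δ : ℝ := 1 / (2 * Real.sqrt n) with hδdef
  have hsq : 0 < Real.sqrt n := Real.sqrt_pos.mpr hnpos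
  have hδpos : 0 < δ := by positivity
  set wvec : Fin n × Bool → En n := fun p =>
    if p.2 then EuclideanSpace.single p.1 (1 : ℝ) else -EuclideanSpace.single p.1 (1 : ℝ)
    with hwdef
  have hwnorm : ∀ p, ‖wvec p‖ = 1 := by
    rintro ⟨i, b⟩
    cases b <;> simp [hwdef, EuclideanSpace.norm_single]
  set g : Fin n × Bool → Sph n → ℝ := fun p v => max (⟪wvec p, (v : En n)⟫ - δ) 0 with hgdef
  have hgcont : ∀ p, Continuous (g p) := fun p =>
    ((continuous_const.inner continuous_subtype_val).sub continuous_const).max continuous_const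
  have hgnonneg : ∀ p v, 0 ≤ g p v := fun p v => le_max_right _ _
  set G : Sph n → ℝ := fun v => ∑ p : Fin n × Bool, g p v with hGdef
  have hGcont : Continuous G := continuous_finset_sum _ (fun p _ => (hgcont p))
  have hGpos : ∀ v, 0 < G v := by
    intro v
    have hv1 : ‖(v : En n)‖ = 1 := mem_sphere_zero_iff_norm.mp v.2
    have hex : ∃ i : Fin n, 1 / Real.sqrt n ≤ |(v : En n) i| := by
      by_contra hcon
      push_neg at hcon
      have hsum : ∑ i : Fin n, ((v : En n) i) ^ 2 < ∑ _i : Fin n, (1 / Real.sqrt n) ^ 2 := by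
        apply Finset.sum_lt_sum_of_nonempty Finset.univ_nonempty
        intro i _
        calc ((v : En n) i) ^ 2 = |(v : En n) i| ^ 2 := (sq_abs _).symm
        _ < (1 / Real.sqrt n) ^ 2 := by
            apply pow_lt_pow_left₀ (hcon i) (abs_nonneg _) (two_ne_zero)
      have heq1 : ∑ i : Fin n, ((v : En n) i) ^ 2 = 1 := by
        have hne := EuclideanSpace.norm_eq (v : En n)
        rw [hv1] at hne
        have h3 : (∑ i, ‖(v : En n) i‖ ^ 2) = 1 := by
          have h4 := Real.sq_sqrt (by positivity : (0:ℝ) ≤ ∑ i, ‖(v : En n) i‖ ^ 2)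
          rw [← hne] at h4
          simpa using h4.symm
        simpa [Real.norm_eq_abs, sq_abs] using h3
      have heq2 : ∑ _i : Fin n, (1 / Real.sqrt n) ^ 2 = 1 := by
        rw [Finset.sum_const, Finset.card_univ, Fintype.card_fin, nsmul_eq_mul, div_pow,
          one_pow, Real.sq_sqrt hnpos.le]
        field_simp
      rw [heq1, heq2] at hsum
      exact lt_irrefl 1 hsum
    obtain ⟨i, hi⟩ := hex
    have hex2 : ∃ p, 1 / Real.sqrt n ≤ ⟪wvec p, (v : En n)⟫ := by
      rcases le_or_gt 0 ((v : En n) i) with h | h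
      · refine ⟨(i, true), ?_⟩
        have hw : wvec (i, true) = EuclideanSpace.single i (1:ℝ) := by simp [hwdef]
        rw [hw, EuclideanSpace.inner_single_left]
        simpa [abs_of_nonneg h] using hi
      · refine ⟨(i, false), ?_⟩
        have hw : wvec (i, false) = -EuclideanSpace.single i (1:ℝ) := by simp [hwdef]
        rw [hw, inner_neg_left, EuclideanSpace.inner_single_left]
        simpa [abs_of_neg h] using hi
    obtain ⟨p, hp⟩ := hex2
    have hgp : δ ≤ g p v := by
      have hδδ : 1 / Real.sqrt n - δ = δ := by
        rw [hδdef]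
        field_simp
        ring
      have : δ ≤ ⟪wvec p, (v : En n)⟫ - δ := by
        rw [← hδδ] at *
        linarith
      exact this.trans (le_max_left _ _)
    calc (0:ℝ) < δ := hδpos
    _ ≤ g p v := hgp
    _ ≤ G v := Finset.single_le_sum (fun q _ => hgnonneg q v) (Finset.mem_univ p)
  set χ : Fin n × Bool → C(Sph n, ℂ) := fun p =>
    ⟨fun v => ((g p v / G v : ℝ) : ℂ),
      Complex.continuous_ofReal.comp ((hgcont p).div hGcont (fun v => (hGpos v).ne'))⟩
    with hχdef
  have hφeq : φ = ∑ p : Fin n × Bool, φ * χ p := by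
    ext v
    rw [ContinuousMap.sum_apply]
    have hsχ : ∑ p : Fin n × Bool, (χ p) v = 1 := by
      rw [hχdef]
      simp only [ContinuousMap.coe_mk]
      rw [← Complex.ofReal_sum, ← Finset.sum_div]
      have hGv : (∑ p : Fin n × Bool, g p v) = G v := rfl
      rw [hGv, div_self (hGpos v).ne']
      norm_num
    calc φ v = φ v * ∑ p : Fin n × Bool, (χ p) v := by rw [hsχ, mul_one]
    _ = ∑ p : Fin n × Bool, φ v * (χ p) v := by rw [Finset.mul_sum]
    _ = ∑ p : Fin n × Bool, (φ * χ p) v := by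
        apply Finset.sum_congr rfl
        intro p _
        rfl
  have hsupp : ∀ p, tsupport ⇑(φ * χ p) ⊆ {v : Sph n | 0 < ⟪wvec p, (v : En n)⟫} := by
    intro p
    have h1 : tsupport ⇑(φ * χ p) ⊆ {v : Sph n | δ ≤ ⟪wvec p, (v : En n)⟫} := by
      apply closure_minimal
      · intro v hv
        simp only [Function.mem_support, ContinuousMap.coe_mul, Pi.mul_apply] at hv
        have hgv : g p v ≠ 0 := by
          intro h0
          apply hv
          rw [hχdef]
          simp [h0]
        have hlt : 0 < ⟪wvec p, (v : En n)⟫ - δ := by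
          by_contra hle
          push_neg at hle
          exact hgv (by rw [hgdef]; exact max_eq_right hle)
        simp only [Set.mem_setOf_eq]
        linarith
      · exact isClosed_le continuous_const (continuous_const.inner continuous_subtype_val)
    exact h1.trans (fun v hv => lt_of_lt_of_le hδpos hv)
  have hmain : ∀ p : Fin n × Bool,
      Ψ Mb (φ * χ p) + Ψ Nb (φ * χ p) = Ψ K (φ * χ p) + Ψ L (φ * χ p) := by
    intro p
    exact StmtZero.hemisphere_case n Ψ hcont hloc K L Mb Nb hconv rfl rfl (wvec p) (hwnorm p)
      (φ * χ p) (hsupp p)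
  have hXsum : ∀ Xb : ConvexBody (En n), Ψ Xb φ = ∑ p : Fin n × Bool, Ψ Xb (φ * χ p) := by
    intro Xb
    conv_lhs => rw [hφeq]
    exact map_sum (Ψ Xb) _ _
  rw [hXsum Mb, hXsum Nb, hXsum K, hXsum L, ← Finset.sum_add_distrib,
    ← Finset.sum_add_distrib]
  exact Finset.sum_congr rfl (fun p _ => hmain p)
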